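/- Let K ≥ 1 be a natural number and R, L real numbers with L ≥ K * R and L > 0. Let θ : Fin K → ℝ satisfy 0 ≤ θ k < R for every k. Then (∑_{k} θ k) / L ∈ Set.Ico (0 : ℝ) 1, and ∑_{k} θ k is the unique real number y ∈ Set.Ico (0 : ℝ) L such that π(y / L) = ∑_{k} π(θ k / L), where π : ℝ → AddCircle (1 : ℝ) is the canonical quotient map. -/
import Mathlib


open Finset

/-- Choice of the scaling factor `L ≥ K * R` avoids overflow: if each local
parameter satisfies `0 ≤ θ k < R`, then the scaled aggregate `(∑ k, θ k) / L`
lies in `[0, 1)`, and `∑ k, θ k` is the unique real number `y ∈ [0, L)` whose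
scaled projection to the torus equals the aggregate of the scaled projections
of the local parameters. -/
theorem scaling_factor_no_overflow
    (K : ℕ) (hK : 1 ≤ K) (R L : ℝ) (hL : (K : ℝ) * R ≤ L) (hL0 : 0 < L)
    (θ : Fin K → ℝ) (hθ0 : ∀ k, 0 ≤ θ k) (hθR : ∀ k, θ k < R) :
    (∑ k : Fin K, θ k) / L ∈ Set.Ico (0 : ℝ) 1 ∧
      ∀ y : ℝ,
        (y ∈ Set.Ico (0 : ℝ) L ∧
            ((y / L : ℝ) : AddCircle (1 : ℝ)) =
              ∑ k : Fin K, ((θ k / L : ℝ) : AddCircle (1 : ℝ)))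
          ↔ y = ∑ k : Fin K, θ k := by
  set S := ∑ k : Fin K, θ k with hS
  have hS0 : 0 ≤ S := Finset.sum_nonneg fun k _ => hθ0 k
  have hSlt : S < (K : ℝ) * R := by
    have : S < ∑ _k : Fin K, R := by
      apply Finset.sum_lt_sum_of_nonempty
      · exact Finset.univ_nonempty_iff.mpr (Fin.pos_iff_nonempty.mp hK)
      · intro k _; exact hθR k
    simpa [Finset.card_univ, mul_comm] using this
  have hSL : S < L := lt_of_lt_of_le hSlt hL
  have hmem : S / L ∈ Set.Ico (0 : ℝ) 1 :=
    ⟨div_nonneg hS0 hL0.le, (div_lt_one hL0).mpr hSL⟩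
  refine ⟨hmem, fun y => ?_⟩
  have hsum : (∑ k : Fin K, ((θ k / L : ℝ) : AddCircle (1 : ℝ))) =
      ((S / L : ℝ) : AddCircle (1 : ℝ)) := by
    rw [hS, Finset.sum_div]
    exact (map_sum (QuotientAddGroup.mk' (AddSubgroup.zmultiples (1:ℝ))) _ _).symm
  constructor
  · rintro ⟨⟨hy0, hyL⟩, hproj⟩
    rw [hsum] at hproj
    have := (AddCircle.coe_eq_coe_iff_of_mem_Ico (p := (1:ℝ)) (a := (0:ℝ)) ?_ ?_).mp hproj
    · have hyS : y / L = S / L := this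
      field_simp at hyS; linarith
    · exact ⟨div_nonneg hy0 hL0.le, by simpa using (div_lt_one hL0).mpr hyL⟩
    · simpa using hmem
  · rintro rfl
    exact ⟨⟨hS0, hSL⟩, hsum.symm⟩
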